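/- Let P_{X,Y} have modal decomposition P_{X,Y}(x,y) = P_X(x)P_Y(y)(1 + Σ_{i=1}^K σ_i f*_i(x) g*_i(y)) with orthonormal families {f*_i} and {g*_i}. Let k*(x,x') = Σ_i f*_i(x)f*_i(x') be the maximal correlation kernel. Then the kernelized discriminative model P^{(k*)}_{Y|X}(y|x) = P_Y(y)(1 + E[k̃*(X,x)|Y=y]) equals the true conditional distribution P_{Y|X}(y|x) for all x, y, where k̃* is the centered kernel. -/

import Mathlib

/-- Modal decomposition
`P_{X,Y}(x,y) = P_X(x)P_Y(y)(1 + ∑ i σ_i f*_i(x) g*_i(y))` with orthonormal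
zero-mean families `{f*_i}`, `{g*_i}`.  For the maximal correlation kernel
`k*(x,x') = ∑ i f*_i(x) f*_i(x')` with centered kernel `k̃*`, the kernelized
discriminative model `P^{(k*)}_{Y|X}(y|x) = P_Y(y)(1 + E[k̃*(X,x)|Y=y])`
equals the true conditional distribution `P_{Y|X}(y|x)` for all `x, y`. -/
theorem stmt7 {X Y : Type*} [Fintype X] [Fintype Y]
    (pX : X → ℝ) (hpX : ∀ x, 0 < pX x) (hpX1 : ∑ x, pX x = 1)
    (pY : Y → ℝ) (hpY : ∀ y, 0 < pY y) (hpY1 : ∑ y, pY y = 1)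
    {K : ℕ} (σ : Fin K → ℝ) (hσ : ∀ i, 0 < σ i)
    (fs : Fin K → X → ℝ) (gs : Fin K → Y → ℝ)
    (hforth : ∀ i j, ∑ x, pX x * fs i x * fs j x = if i = j then 1 else 0)
    (hgorth : ∀ i j, ∑ y, pY y * gs i y * gs j y = if i = j then 1 else 0)
    (hfmean : ∀ i, ∑ x, pX x * fs i x = 0)
    (hgmean : ∀ i, ∑ y, pY y * gs i y = 0)
    (P : X → Y → ℝ)
    (hP : ∀ x y, P x y = pX x * pY y * (1 + ∑ i, σ i * fs i x * gs i y))
    (ks : X → X → ℝ) (hks : ∀ x x', ks x x' = ∑ i, fs i x * fs i x')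
    (kbar : X → ℝ) (hkbar : ∀ x, kbar x = ∑ x', pX x' * ks x' x)
    (kt : X → X → ℝ)
    (hkt : ∀ x x', kt x x' = ks x x' - kbar x - kbar x'
      + ∑ x'', pX x'' * kbar x'') :
    ∀ x y, pY y * (1 + ∑ x', (P x' y / pY y) * kt x' x) = P x y / pX x := by

  have hkb : ∀ z, kbar z = 0 := by
    intro z
    rw [hkbar]
    have h1 : ∀ x', pX x' * ks x' z = ∑ i, (pX x' * fs i x') * fs i z := by
      intro x'
      rw [hks, Finset.mul_sum]
      exact Finset.sum_congr rfl fun i _ => by ring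
    rw [Finset.sum_congr rfl fun x' _ => h1 x', Finset.sum_comm]
    simp only [← Finset.sum_mul, hfmean, zero_mul, Finset.sum_const_zero]
  have hktks : ∀ x x', kt x x' = ks x x' := by
    intro x x'
    rw [hkt]
    simp [hkb]
  have key : ∀ (i : Fin K) (x : X), ∑ x', pX x' * fs i x' * ks x' x = fs i x := by
    intro i x
    have h1 : ∀ x', pX x' * fs i x' * ks x' x
        = ∑ j, (pX x' * fs i x' * fs j x') * fs j x := by
      intro x'
      rw [hks, Finset.mul_sum]
      exact Finset.sum_congr rfl fun j _ => by ring
    rw [Finset.sum_congr rfl fun x' _ => h1 x', Finset.sum_comm]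
    simp only [← Finset.sum_mul, hforth]
    simp
  intro x y
  have hpYne := (hpY y).ne'
  have hpXne := (hpX x).ne'
  have hterm : ∀ x', (P x' y / pY y) * kt x' x
      = pX x' * ks x' x + ∑ i, (σ i * gs i y) * (pX x' * fs i x' * ks x' x) := by
    intro x'
    rw [hktks, hP]
    have h2 : ∑ i, (σ i * gs i y) * (pX x' * fs i x' * ks x' x)
        = (∑ i, σ i * fs i x' * gs i y) * (pX x' * ks x' x) := by
      rw [Finset.sum_mul]
      exact Finset.sum_congr rfl fun i _ => by ring
    rw [h2]
    field_simp
  rw [Finset.sum_congr rfl fun x' _ => hterm x', Finset.sum_add_distrib,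
    ← hkbar, hkb, Finset.sum_comm]
  simp only [← Finset.mul_sum, key]
  have hsum : ∑ i, σ i * gs i y * fs i x = ∑ i, σ i * fs i x * gs i y :=
    Finset.sum_congr rfl fun i _ => by ring
  rw [hsum, hP]
  field_simp
  ring
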